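/- arXiv:1406.5274 — 2 statements merged into one kernel-verified Lean document; each statement's English description precedes it below -/
import Mathlib

section
/- Let n ≥ 2 and let Φ : ℝⁿ → ℝ be locally integrable on the closed half space {xₙ ≥ 0} and satisfy ∫_{ℝⁿ₊} Φ(x) Δφ(x) dx = 0 for every twice continuously differentiable, compactly supported φ : ℝⁿ → ℝ such that ∂φ/∂xₙ(x', 0) = 0 for all x' ∈ ℝⁿ⁻¹. Define the even extension Φ̃ : ℝⁿ → ℝ by Φ̃(x', xₙ) = Φ(x', xₙ) for xₙ ≥ 0 and Φ̃(x', xₙ) = Φ(x', −xₙ) for xₙ < 0. Then Φ̃ is weakly harmonic on ℝⁿ: ∫_{ℝⁿ} Φ̃(x) Δψ(x) dx = 0 for every twice continuously differentiable ψ : ℝⁿ → ℝ with compact support. -/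
set_option maxHeartbeats 1000000


open MeasureTheory Set Metric Filter

noncomputable section

abbrev En (n : ℕ) := EuclideanSpace ℝ (Fin n)

/-- the `i`-th standard basis vector of `ℝⁿ`. -/
def eb (n : ℕ) (i : Fin n) : En n := EuclideanSpace.single i 1

/-- the Laplacian `Δf`, computed as the sum of the second derivatives in the
coordinate directions. -/
def vlap {n : ℕ} {F : Type*} [NormedAddCommGroup F] [NormedSpace ℝ F]
    (f : En n → F) (x : En n) : F :=
  ∑ i, fderiv ℝ (fun y => fderiv ℝ f y (eb n i)) x (eb n i)

/-- the divergence `div v = Σⱼ ∂vʲ/∂xⱼ` of a vector field. -/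
def vdiv {n : ℕ} (v : En n → En n) (x : En n) : ℝ :=
  ∑ i, fderiv ℝ v x (eb n i) i

/-- the index of the last coordinate of `ℝⁿ`. -/
def lastIdx (n : ℕ) (hn : 2 ≤ n) : Fin n := ⟨n - 1, by omega⟩

/-- the last coordinate `xₙ` of a point of `ℝⁿ`. -/
def xlast (n : ℕ) (hn : 2 ≤ n) (x : En n) : ℝ := x (lastIdx n hn)

/-- the open upper half space `ℝⁿ₊ = {x : xₙ > 0}`. -/
def openHalf (n : ℕ) (hn : 2 ≤ n) : Set (En n) := {x : En n | 0 < xlast n hn x}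

/-- the closed upper half space `{x : xₙ ≥ 0}`. -/
def closedHalf (n : ℕ) (hn : 2 ≤ n) : Set (En n) := {x : En n | 0 ≤ xlast n hn x}

/-- the reflection of a point of `ℝⁿ` in the hyperplane `{xₙ = 0}`. -/
def reflectLast (n : ℕ) (hn : 2 ≤ n) (x : En n) : En n :=
  WithLp.toLp 2 (fun i => if i = lastIdx n hn then -(x i) else x i)

/-- The reflection, as a linear isometry equivalence. -/
def RL (n : ℕ) (hn : 2 ≤ n) : En n ≃ₗᵢ[ℝ] En n where
  toLinearEquiv :=
  { toFun := reflectLast n hn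
    invFun := reflectLast n hn
    map_add' := by
      intro x y; ext i
      simp only [reflectLast, PiLp.add_apply]
      split <;> ring
    map_smul' := by
      intro c x; ext i
      simp only [reflectLast, PiLp.smul_apply, RingHom.id_apply, smul_eq_mul]
      split <;> ring
    left_inv := by
      intro x; ext i
      simp only [reflectLast]
      split <;> simp_all
    right_inv := by
      intro x; ext i
      simp only [reflectLast]
      split <;> simp_all }
  norm_map' := by
    intro x
    simp only [EuclideanSpace.norm_eq]
    congr 1
    refine Finset.sum_congr rfl fun i _ => ?_
    simp only [LinearEquiv.coe_mk, LinearMap.coe_mk, AddHom.coe_mk, reflectLast, PiLp.toLp_apply]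
    split <;> simp

variable {n : ℕ} (hn : 2 ≤ n)

/-- The reflection, as a continuous linear map. -/
def Rc (n : ℕ) (hn : 2 ≤ n) : En n →L[ℝ] En n :=
  (RL n hn).toLinearIsometry.toContinuousLinearMap

lemma RL_apply (x : En n) : RL n hn x = reflectLast n hn x := rfl

lemma Rc_apply (x : En n) : Rc n hn x = reflectLast n hn x := rfl

lemma RL_eq_Rc : ⇑(RL n hn) = ⇑(Rc n hn) := rfl

lemma Rc_invol (x : En n) : Rc n hn (Rc n hn x) = x := by
  ext i
  simp only [Rc_apply, reflectLast]
  split <;> simp_all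

lemma Rc_eb (i : Fin n) :
    Rc n hn (eb n i) = (if i = lastIdx n hn then (-1:ℝ) else 1) • eb n i := by
  rw [Rc_apply]
  ext j
  simp only [reflectLast, PiLp.smul_apply, smul_eq_mul, eb, EuclideanSpace.single_apply]
  by_cases hj : j = lastIdx n hn <;> by_cases hij : i = lastIdx n hn <;>
    by_cases hji : j = i <;> simp_all

lemma g_contDiff {ψ : En n → ℝ} (hψ : ContDiff ℝ 2 ψ) (v : En n) :
    ContDiff ℝ 1 (fun z => fderiv ℝ ψ z v) :=
  (hψ.fderiv_right (by norm_num)).clm_apply contDiff_const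

lemma fderiv_comp_Rc {ψ : En n → ℝ} (hψ : Differentiable ℝ ψ) (y : En n) :
    fderiv ℝ (fun z => ψ (Rc n hn z)) y = (fderiv ℝ ψ (Rc n hn y)).comp (Rc n hn) := by
  have h : HasFDerivAt (fun z => ψ (Rc n hn z))
      ((fderiv ℝ ψ (Rc n hn y)).comp (Rc n hn)) y :=
    (hψ (Rc n hn y)).hasFDerivAt.comp y (Rc n hn).hasFDerivAt
  exact h.fderiv

lemma vlap_comp {ψ : En n → ℝ} (hψ : ContDiff ℝ 2 ψ) (x : En n) :
    vlap (fun y => ψ (Rc n hn y)) x = vlap ψ (Rc n hn x) := by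
  unfold vlap
  refine Finset.sum_congr rfl fun i _ => ?_
  set c : ℝ := if i = lastIdx n hn then (-1:ℝ) else 1 with hc
  have hcc : c * c = 1 := by rw [hc]; split <;> norm_num
  have hd : Differentiable ℝ ψ := hψ.differentiable two_ne_zero
  set g : En n → ℝ := fun z => fderiv ℝ ψ z (eb n i) with hg
  have hgc : ContDiff ℝ 1 g := g_contDiff hψ (eb n i)
  have h1 : (fun y => fderiv ℝ (fun z => ψ (Rc n hn z)) y (eb n i))
      = fun y => c • g (Rc n hn y) := by
    funext y
    rw [fderiv_comp_Rc hn hd y]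
    simp only [ContinuousLinearMap.coe_comp', Function.comp_apply, Rc_eb hn i, ← hc]
    rw [ContinuousLinearMap.map_smul]
  rw [h1]
  have hdg : DifferentiableAt ℝ g (Rc n hn x) := hgc.differentiable one_ne_zero _
  have hcomp : HasFDerivAt (fun y => g (Rc n hn y))
      ((fderiv ℝ g (Rc n hn x)).comp (Rc n hn)) x :=
    hdg.hasFDerivAt.comp x (Rc n hn).hasFDerivAt
  rw [fderiv_fun_const_smul hcomp.differentiableAt, hcomp.fderiv]
  simp only [ContinuousLinearMap.smul_apply, ContinuousLinearMap.coe_comp',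
    Function.comp_apply, Rc_eb hn i, ← hc]
  rw [ContinuousLinearMap.map_smul, smul_eq_mul, smul_eq_mul, ← mul_assoc, hcc, one_mul]

lemma vlap_add {ψ χ : En n → ℝ} (hψ : ContDiff ℝ 2 ψ) (hχ : ContDiff ℝ 2 χ) (x : En n) :
    vlap (fun y => ψ y + χ y) x = vlap ψ x + vlap χ x := by
  unfold vlap
  rw [← Finset.sum_add_distrib]
  refine Finset.sum_congr rfl fun i _ => ?_
  have h1 : (fun y => fderiv ℝ (fun z => ψ z + χ z) y (eb n i))
      = fun y => fderiv ℝ ψ y (eb n i) + fderiv ℝ χ y (eb n i) := by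
    funext y
    rw [fderiv_fun_add (hψ.differentiable two_ne_zero y) (hχ.differentiable two_ne_zero y)]
    rfl
  rw [h1, fderiv_fun_add ((g_contDiff hψ _).differentiable one_ne_zero x)
    ((g_contDiff hχ _).differentiable one_ne_zero x)]
  rfl

lemma vlap_continuous {ψ : En n → ℝ} (hψ : ContDiff ℝ 2 ψ) : Continuous (vlap ψ) := by
  unfold vlap
  refine continuous_finset_sum _ fun i _ => ?_
  exact (((g_contDiff hψ (eb n i)).continuous_fderiv one_ne_zero).clm_apply continuous_const)

lemma vlap_compactSupport {ψ : En n → ℝ} (hψc : HasCompactSupport ψ) :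
    HasCompactSupport (vlap (n := n) ψ) := by
  apply HasCompactSupport.intro hψc
  intro x hx
  unfold vlap
  refine Finset.sum_eq_zero fun i _ => ?_
  have hop : IsOpen (tsupport ψ)ᶜ := (isClosed_tsupport ψ).isOpen_compl
  have h0 : ∀ y ∈ (tsupport ψ)ᶜ, fderiv ℝ ψ y (eb n i) = 0 := by
    intro y hy
    have : fderiv ℝ ψ y = 0 := by
      have : ψ =ᶠ[nhds y] (fun _ => 0) := by
        filter_upwards [hop.mem_nhds hy] with z hz
        exact image_eq_zero_of_notMem_tsupport hz
      rw [this.fderiv_eq, fderiv_fun_const]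
      rfl
    simp [this]
  have : (fun y => fderiv ℝ ψ y (eb n i)) =ᶠ[nhds x] (fun _ => 0) := by
    filter_upwards [hop.mem_nhds hx] with z hz using h0 z hz
  rw [this.fderiv_eq, fderiv_fun_const]
  rfl

lemma continuous_xlast : Continuous (xlast n hn) := by unfold xlast; fun_prop

lemma isClosed_closedHalf : IsClosed (closedHalf n hn) :=
  isClosed_Ici.preimage (continuous_xlast hn)

lemma integrableOn_mul_closedHalf {Φ g : En n → ℝ}
    (hloc : LocallyIntegrableOn Φ (closedHalf n hn))
    (hg : Continuous g) (hgc : HasCompactSupport g) :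
    IntegrableOn (fun x => Φ x * g x) (closedHalf n hn) := by
  set K := tsupport g with hK
  have h1 : IntegrableOn Φ (closedHalf n hn ∩ K) :=
    hloc.integrableOn_compact_subset inter_subset_left
      (hgc.inter_left (isClosed_closedHalf hn))
  obtain ⟨C, hC⟩ := hgc.exists_bound_of_continuous hg
  have h2 : IntegrableOn (fun x => Φ x * g x) (closedHalf n hn ∩ K) := by
    have := Integrable.bdd_mul h1 (hg.aestronglyMeasurable) (Filter.Eventually.of_forall hC)
    exact this.congr (Filter.Eventually.of_forall fun x => mul_comm _ _)
  have h3 : closedHalf n hn ⊆ (closedHalf n hn ∩ K) ∪ (closedHalf n hn \ K) := fun x hx => by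
    by_cases hxK : x ∈ K
    · exact Or.inl ⟨hx, hxK⟩
    · exact Or.inr ⟨hx, hxK⟩
  refine IntegrableOn.mono_set ?_ h3
  refine h2.union ?_
  have : ∀ x ∈ closedHalf n hn \ K, Φ x * g x = 0 := by
    intro x hx
    rw [image_eq_zero_of_notMem_tsupport hx.2, mul_zero]
  exact (integrableOn_congr_fun this
    (((isClosed_closedHalf hn).measurableSet).diff hgc.measurableSet)).mpr
    (integrableOn_zero)

/-- the last-coordinate functional, as a linear map -/
def Lcoord (n : ℕ) (hn : 2 ≤ n) : En n →ₗ[ℝ] ℝ where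
  toFun x := x (lastIdx n hn)
  map_add' x y := rfl
  map_smul' c x := rfl

lemma boundary_null : volume {x : En n | xlast n hn x = 0} = 0 := by
  have hset : {x : En n | xlast n hn x = 0} = (LinearMap.ker (Lcoord n hn) : Set (En n)) := by
    ext x
    simp [LinearMap.mem_ker, Lcoord, xlast]
    exact Iff.rfl
  rw [hset]
  apply MeasureTheory.Measure.addHaar_submodule
  intro h
  have h1 : eb n (lastIdx n hn) ∈ LinearMap.ker (Lcoord n hn) := h ▸ Submodule.mem_top
  have h2 : Lcoord n hn (eb n (lastIdx n hn)) = 1 := by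
    show (EuclideanSpace.single (lastIdx n hn) (1:ℝ) : En n) (lastIdx n hn) = 1
    simp [Lcoord, eb, EuclideanSpace.single_apply]
  rw [LinearMap.mem_ker, h2] at h1
  exact one_ne_zero h1

lemma closedHalf_ae_openHalf : closedHalf n hn =ᵐ[volume] openHalf n hn := by
  rw [Filter.eventuallyEq_set]
  rw [MeasureTheory.ae_iff]
  refine measure_mono_null ?_ (boundary_null hn)
  intro x hx
  simp only [closedHalf, openHalf, mem_setOf_eq] at hx ⊢
  by_contra h
  rcases lt_or_gt_of_ne h with h1 | h1
  · exact hx (by constructor <;> intro h2 <;> [exact absurd h2 (not_le.mpr h1); linarith])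
  · exact hx (by constructor <;> intro _ <;> [exact h1; linarith])

lemma Rc_preimage_openHalf :
    ⇑(Rc n hn) ⁻¹' openHalf n hn = (closedHalf n hn)ᶜ := by
  ext x
  have hx : xlast n hn (Rc n hn x) = -(xlast n hn x) := by
    simp [xlast, Rc_apply, reflectLast]
  simp only [mem_preimage, openHalf, closedHalf, mem_setOf_eq, mem_compl_iff, not_le, hx]
  exact neg_pos

/-- The reflection step in the proof of Lemma 2.5: a function satisfying the weak
homogeneous Neumann condition on the half space has weakly harmonic even extension. -/
theorem even_extension_weakly_harmonic
    (n : ℕ) (hn : 2 ≤ n) (Φ : En n → ℝ)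
    (hloc : LocallyIntegrableOn Φ (closedHalf n hn))
    -- weak homogeneous Neumann condition: ∫ Φ Δφ = 0 for C² compactly supported φ
    -- with ∂φ/∂xₙ = 0 on {xₙ = 0}
    (hweak : ∀ φ : En n → ℝ, ContDiff ℝ 2 φ → HasCompactSupport φ →
        (∀ x : En n, xlast n hn x = 0 → fderiv ℝ φ x (eb n (lastIdx n hn)) = 0) →
        ∫ x in openHalf n hn, Φ x * vlap φ x = 0)
    -- the even extension of Φ
    (Φt : En n → ℝ)
    (hΦt : ∀ x : En n, Φt x = if 0 ≤ xlast n hn x then Φ x else Φ (reflectLast n hn x)) :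
    ∀ ψ : En n → ℝ, ContDiff ℝ 2 ψ → HasCompactSupport ψ →
      ∫ x : En n, Φt x * vlap ψ x = 0 := by
  intro ψ hψ hψc
  set ψR : En n → ℝ := fun y => ψ (Rc n hn y) with hψR
  have hψR2 : ContDiff ℝ 2 ψR := hψ.comp (Rc n hn).contDiff
  have hψRc : HasCompactSupport ψR := by
    have := hψc.comp_homeomorph (RL n hn).toHomeomorph
    exact this
  set φ : En n → ℝ := fun y => ψ y + ψR y with hφ
  have hφ2 : ContDiff ℝ 2 φ := hψ.add hψR2
  have hφc : HasCompactSupport φ := hψc.add hψRc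
  -- Neumann condition for φ
  have hNeu : ∀ x : En n, xlast n hn x = 0 → fderiv ℝ φ x (eb n (lastIdx n hn)) = 0 := by
    intro x hx
    have hRx : Rc n hn x = x := by
      ext i
      simp only [Rc_apply, reflectLast]
      split
      · rename_i h; rw [h]; rw [show x (lastIdx n hn) = 0 from hx]; ring
      · rfl
    have hd1 : DifferentiableAt ℝ ψ x := hψ.differentiable two_ne_zero x
    have hd2 : DifferentiableAt ℝ ψR x := hψR2.differentiable two_ne_zero x
    rw [hφ, fderiv_fun_add hd1 hd2]
    have h2 : fderiv ℝ ψR x = (fderiv ℝ ψ (Rc n hn x)).comp (Rc n hn) :=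
      fderiv_comp_Rc hn (hψ.differentiable two_ne_zero) x
    simp only [ContinuousLinearMap.add_apply, h2, ContinuousLinearMap.coe_comp',
      Function.comp_apply, Rc_eb hn, if_pos rfl, hRx]
    rw [ContinuousLinearMap.map_smul]
    simp
  -- the key integrands
  set f : En n → ℝ := fun x => Φt x * vlap ψ x with hf
  set u : En n → ℝ := fun x => Φ x * vlap ψ x with hu
  set g : En n → ℝ := fun z => Φ z * vlap ψR z with hg
  have hmeasC : MeasurableSet (closedHalf n hn) := (isClosed_closedHalf hn).measurableSet
  have hu_int : IntegrableOn u (closedHalf n hn) :=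
    integrableOn_mul_closedHalf hn hloc (vlap_continuous hψ) (vlap_compactSupport hψc)
  have hg_int : IntegrableOn g (closedHalf n hn) :=
    integrableOn_mul_closedHalf hn hloc (vlap_continuous hψR2) (vlap_compactSupport hψRc)
  have hsub : openHalf n hn ⊆ closedHalf n hn := by
    intro x hx
    rw [openHalf, mem_setOf_eq] at hx
    rw [closedHalf, mem_setOf_eq]
    exact le_of_lt hx
  -- equality of f with u on the closed half space
  have hEqU : EqOn f u (closedHalf n hn) := by
    intro x hx
    rw [closedHalf, mem_setOf_eq] at hx
    simp only [hf, hu, hΦt x, if_pos hx]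
  -- equality of f with g ∘ R on the complement
  have hEqG : EqOn f (fun x => g (Rc n hn x)) (closedHalf n hn)ᶜ := by
    intro x hx
    rw [mem_compl_iff, closedHalf, mem_setOf_eq] at hx
    have hx' : ¬ 0 ≤ xlast n hn x := hx
    simp only [hf, hg, hΦt x, if_neg hx']
    have h1 : vlap ψR (Rc n hn x) = vlap ψ x := by
      rw [vlap_comp hn hψ (Rc n hn x), Rc_invol]
    rw [h1, ← Rc_apply]
  have hMP : MeasurePreserving (⇑(RL n hn)) volume volume := (RL n hn).measurePreserving
  have hEmb : MeasurableEmbedding (⇑(RL n hn)) :=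
    (RL n hn).toHomeomorph.measurableEmbedding
  -- integrability of f on the complement
  have hgR_int : IntegrableOn (fun x => g (Rc n hn x)) (closedHalf n hn)ᶜ := by
    rw [← Rc_preimage_openHalf hn, ← RL_eq_Rc]
    have hres := hMP.restrict_preimage_emb hEmb (openHalf n hn)
    have h2 : Integrable (g ∘ ⇑(RL n hn))
        (volume.restrict (⇑(RL n hn) ⁻¹' openHalf n hn)) :=
      (hres.integrable_comp_emb hEmb).mpr (hg_int.mono_set hsub)
    exact h2
  have hf_intC : IntegrableOn f (closedHalf n hn) :=
    (integrableOn_congr_fun hEqU hmeasC).mpr hu_int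
  have hf_intCc : IntegrableOn f (closedHalf n hn)ᶜ :=
    (integrableOn_congr_fun hEqG hmeasC.compl).mpr hgR_int
  have hf_int : Integrable f := by
    have := hf_intC.union hf_intCc
    rwa [union_compl_self, integrableOn_univ] at this
  -- split the integral
  have hsplit : ∫ x : En n, f x
      = (∫ x in closedHalf n hn, f x) + ∫ x in (closedHalf n hn)ᶜ, f x :=
    (integral_add_compl hmeasC hf_int).symm
  have hupper : ∫ x in closedHalf n hn, f x = ∫ x in openHalf n hn, u x := by
    rw [setIntegral_congr_fun hmeasC hEqU]
    exact setIntegral_congr_set (closedHalf_ae_openHalf hn)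
  have hlower : ∫ x in (closedHalf n hn)ᶜ, f x = ∫ x in openHalf n hn, g x := by
    rw [setIntegral_congr_fun hmeasC.compl hEqG, ← Rc_preimage_openHalf hn, ← RL_eq_Rc]
    exact hMP.setIntegral_preimage_emb hEmb g (openHalf n hn)
  have hcomb : (∫ x in openHalf n hn, u x) + ∫ x in openHalf n hn, g x
      = ∫ x in openHalf n hn, Φ x * vlap φ x := by
    rw [← integral_add (hu_int.mono_set hsub) (hg_int.mono_set hsub)]
    apply setIntegral_congr_fun
    · exact (isOpen_lt continuous_const (continuous_xlast hn)).measurableSet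
    · intro x _
      simp only [hu, hg, hφ]
      rw [vlap_add hψ hψR2 x]
      ring
  rw [hsplit, hupper, hlower, hcomb]
  exact hweak φ hφ2 hφc hNeu
end
end

section
/- Let n ≥ 2 and let φ : {x ∈ ℝⁿ : xₙ ≥ 0} → ℝ be continuously differentiable with φ(x', 0) = 0 for all x' ∈ ℝⁿ⁻¹. Assume φ ∈ L¹(ℝⁿ₊) and M := sup_{xₙ > 0} ∫_{ℝⁿ⁻¹} |∂φ/∂xₙ(x', xₙ)| dx' < ∞. Then ∫_{ℝⁿ₊} |φ(x)| / xₙ dx ≤ M + ∫_{ℝⁿ₊} |φ(x)| dx; in particular x ↦ φ(x)/xₙ belongs to L¹(ℝⁿ₊). -/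
open MeasureTheory Set Metric Filter

noncomputable section

section Aux

variable {m : ℕ} {φ : En m × ℝ → ℝ}

lemma hopen_half : IsOpen {p : En m × ℝ | 0 < p.2} :=
  isOpen_lt continuous_const continuous_snd

lemma hnhds_half {p : En m × ℝ} (hp : 0 < p.2) :
    {q : En m × ℝ | 0 ≤ q.2} ∈ nhds p :=
  mem_nhds_iff.2 ⟨{q : En m × ℝ | 0 < q.2}, fun q hq => show (0:ℝ) ≤ q.2 from le_of_lt hq, hopen_half, hp⟩

lemma huniq_half : UniqueDiffOn ℝ {p : En m × ℝ | 0 ≤ p.2} := by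
  apply uniqueDiffOn_convex
  · intro p hp q hq a b ha hb hab
    simp only [mem_setOf_eq, Prod.snd_add, Prod.smul_snd, smul_eq_mul]
    exact add_nonneg (mul_nonneg ha hp) (mul_nonneg hb hq)
  · refine ⟨(0, 1), ?_⟩
    have h1 : ((0 : En m), (1:ℝ)) ∈ {p : En m × ℝ | 0 < p.2} := by
      simp only [mem_setOf_eq]; norm_num
    exact (hopen_half.subset_interior_iff.2
      fun q hq => show (0:ℝ) ≤ q.2 from le_of_lt hq) h1

lemma slice_hasDerivAt (hreg : ContDiffOn ℝ 1 φ {p : En m × ℝ | 0 ≤ p.2})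
    (x : En m) {s : ℝ} (hs : 0 < s) :
    HasDerivAt (fun r => φ (x, r)) (deriv (fun r => φ (x, r)) s) s := by
  have hD : DifferentiableAt ℝ φ (x, s) :=
    (hreg.differentiableOn one_ne_zero).differentiableAt (hnhds_half hs)
  have hcurve : HasDerivAt (fun r : ℝ => ((x, r) : En m × ℝ)) ((0 : En m), (1:ℝ)) s :=
    (hasDerivAt_const s x).prodMk (hasDerivAt_id s)
  have h2 : HasDerivAt (fun r => φ (x, r)) (fderiv ℝ φ (x, s) ((0 : En m), (1:ℝ))) s :=
    hD.hasFDerivAt.comp_hasDerivAt s hcurve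
  exact h2.deriv ▸ h2

lemma slice_deriv_eq (hreg : ContDiffOn ℝ 1 φ {p : En m × ℝ | 0 ≤ p.2})
    (x : En m) {s : ℝ} (hs : 0 < s) :
    deriv (fun r => φ (x, r)) s
      = fderivWithin ℝ φ {p : En m × ℝ | 0 ≤ p.2} (x, s) ((0 : En m), (1:ℝ)) := by
  have hD : DifferentiableAt ℝ φ (x, s) :=
    (hreg.differentiableOn one_ne_zero).differentiableAt (hnhds_half hs)
  have hcurve : HasDerivAt (fun r : ℝ => ((x, r) : En m × ℝ)) ((0 : En m), (1:ℝ)) s :=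
    (hasDerivAt_const s x).prodMk (hasDerivAt_id s)
  have h2 : HasDerivAt (fun r => φ (x, r)) (fderiv ℝ φ (x, s) ((0 : En m), (1:ℝ))) s :=
    hD.hasFDerivAt.comp_hasDerivAt s hcurve
  rw [h2.deriv, fderivWithin_of_mem_nhds (hnhds_half hs)]

lemma ftc_bound (hreg : ContDiffOn ℝ 1 φ {p : En m × ℝ | 0 ≤ p.2})
    (hbc : ∀ x : En m, φ (x, 0) = 0) (x : En m) {t : ℝ} (ht : 0 < t) :
    |φ (x, t)| ≤ ∫ s in Ioo (0:ℝ) t, |deriv (fun r => φ (x, r)) s| := by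
  set S : Set (En m × ℝ) := {p : En m × ℝ | 0 ≤ p.2} with hSdef
  set g : ℝ → ℝ := fun s => fderivWithin ℝ φ S (x, s) ((0 : En m), (1:ℝ)) with hgdef
  have hcurve : Continuous (fun r : ℝ => ((x, r) : En m × ℝ)) :=
    (continuous_const.prodMk continuous_id)
  have hmaps : MapsTo (fun r : ℝ => ((x, r) : En m × ℝ)) (Icc 0 t) S :=
    fun s hs => hs.1
  have hgcont : ContinuousOn g (Icc 0 t) := by
    have h1 : ContinuousOn (fun s : ℝ => fderivWithin ℝ φ S (x, s)) (Icc 0 t) :=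
      (hreg.continuousOn_fderivWithin huniq_half le_rfl).comp hcurve.continuousOn hmaps
    exact h1.clm_apply continuousOn_const
  have hd : ∀ s ∈ Ioo (0:ℝ) t, HasDerivAt (fun r => φ (x, r)) (g s) s := by
    intro s hs
    have := slice_hasDerivAt hreg x hs.1
    rwa [slice_deriv_eq hreg x hs.1] at this
  have hψcont : ContinuousOn (fun r => φ (x, r)) (Icc 0 t) :=
    hreg.continuousOn.comp hcurve.continuousOn hmaps
  have hint : IntervalIntegrable g volume 0 t := by
    apply ContinuousOn.intervalIntegrable
    rwa [uIcc_of_le ht.le]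
  have hFTC : ∫ s in (0:ℝ)..t, g s = φ (x, t) - φ (x, 0) :=
    intervalIntegral.integral_eq_sub_of_hasDerivAt_of_le ht.le hψcont hd hint
  calc |φ (x, t)| = |∫ s in (0:ℝ)..t, g s| := by rw [hFTC, hbc x, sub_zero]
    _ ≤ ∫ s in (0:ℝ)..t, |g s| := intervalIntegral.abs_integral_le_integral_abs ht.le
    _ = ∫ s in Ioo (0:ℝ) t, |g s| := by
        rw [intervalIntegral.integral_of_le ht.le, integral_Ioc_eq_integral_Ioo]
    _ = ∫ s in Ioo (0:ℝ) t, |deriv (fun r => φ (x, r)) s| := by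
        refine setIntegral_congr_fun measurableSet_Ioo fun s hs => ?_
        rw [slice_deriv_eq hreg x hs.1]


lemma meas_deriv (hreg : ContDiffOn ℝ 1 φ {p : En m × ℝ | 0 ≤ p.2}) :
    AEMeasurable (fun p : En m × ℝ => deriv (fun r => φ (p.1, r)) p.2)
      (volume.restrict {p : En m × ℝ | 0 < p.2}) := by
  set U : Set (En m × ℝ) := {p : En m × ℝ | 0 < p.2} with hU
  have hUmeas : MeasurableSet U := hopen_half.measurableSet
  set D : ℕ → En m × ℝ → ℝ :=
    fun k p => (φ (p.1, p.2 + ((k:ℝ)+1)⁻¹) - φ (p.1, p.2)) * ((k:ℝ)+1) with hD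
  have hDmeas : ∀ k, AEMeasurable (D k) (volume.restrict U) := by
    intro k
    have hφc : ContinuousOn φ {p : En m × ℝ | 0 ≤ p.2} := hreg.continuousOn
    have h1 : ContinuousOn (fun p : En m × ℝ => φ (p.1, p.2 + ((k:ℝ)+1)⁻¹)) U := by
      apply hφc.comp ((continuous_fst.prodMk (continuous_snd.add continuous_const)).continuousOn)
      intro p hp
      have : (0:ℝ) < p.2 := hp
      show (0:ℝ) ≤ p.2 + ((k:ℝ)+1)⁻¹
      positivity
    have h2 : ContinuousOn (fun p : En m × ℝ => φ (p.1, p.2)) U := by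
      apply hφc.mono (fun q hq => show (0:ℝ) ≤ q.2 from le_of_lt hq)
    exact (((h1.sub h2).mul continuousOn_const)).aemeasurable hUmeas
  apply aemeasurable_of_tendsto_metrizable_ae atTop hDmeas
  refine (ae_restrict_iff' hUmeas).2 (ae_of_all _ fun p hp => ?_)
  have hp' : (0:ℝ) < p.2 := hp
  have hd := slice_hasDerivAt hreg p.1 hp'
  rw [hasDerivAt_iff_tendsto_slope] at hd
  have hseq : Tendsto (fun k : ℕ => p.2 + ((k:ℝ)+1)⁻¹) atTop (nhdsWithin p.2 {p.2}ᶜ) := by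
    rw [tendsto_nhdsWithin_iff]
    constructor
    · have : Tendsto (fun k : ℕ => ((k:ℝ)+1)⁻¹) atTop (nhds 0) := by
        have := tendsto_one_div_add_atTop_nhds_zero_nat (𝕜 := ℝ)
        apply this.congr
        intro k
        push_cast
        rw [one_div]
      simpa using tendsto_const_nhds.add this
    · filter_upwards with k
      have : (0:ℝ) < ((k:ℝ)+1)⁻¹ := by positivity
      simp only [mem_compl_iff, mem_singleton_iff]
      intro h
      nlinarith
  have := hd.comp hseq
  apply this.congr
  intro k
  have hne : ((k:ℝ)+1)⁻¹ ≠ 0 := by positivity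
  simp only [Function.comp_apply, slope_def_field, D]
  rw [add_sub_cancel_left, div_eq_mul_inv, inv_inv]

lemma ofReal_int_le {α : Type*} [MeasurableSpace α] (μ : Measure α) (f : α → ℝ)
    (h : 0 ≤ᵐ[μ] f) :
    ENNReal.ofReal (∫ a, f a ∂μ) ≤ ∫⁻ a, ENNReal.ofReal (f a) ∂μ := by
  by_cases hf : Integrable f μ
  · exact (ofReal_integral_eq_lintegral_ofReal hf h).le
  · rw [integral_undef hf]; simp


end Aux

/-- The Hardy-type inequality from the proof of Proposition A.1:
if `φ` is `C¹` on the closed half space `ℝⁿ⁻¹ × [0,∞)`, vanishes on the boundary,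
is integrable, and `∂ₙφ ∈ L^∞(ℝ₊; L¹(ℝⁿ⁻¹))` with bound `M`, then
`∫ |φ|/xₙ ≤ M + ∫ |φ|`. -/
theorem hardy_inequality_halfspace
    (n : ℕ) (hn : 2 ≤ n) (φ : En (n - 1) × ℝ → ℝ) (M : ℝ)
    -- φ is C¹ on the closed half space
    (hreg : ContDiffOn ℝ 1 φ {p : En (n - 1) × ℝ | 0 ≤ p.2})
    -- φ(x', 0) = 0
    (hbc : ∀ x : En (n - 1), φ (x, 0) = 0)
    -- φ ∈ L¹(ℝⁿ₊)
    (hL1 : IntegrableOn φ {p : En (n - 1) × ℝ | 0 < p.2})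
    -- the slices of ∂ₙφ are integrable with L¹(ℝⁿ⁻¹)-norm uniformly bounded by M
    (hslice : ∀ s : ℝ, 0 < s →
        Integrable (fun x : En (n - 1) => deriv (fun r => φ (x, r)) s))
    (hM : ∀ s : ℝ, 0 < s →
        ∫ x : En (n - 1), |deriv (fun r => φ (x, r)) s| ≤ M) :
    IntegrableOn (fun p : En (n - 1) × ℝ => |φ p| / p.2) {p : En (n - 1) × ℝ | 0 < p.2} ∧
      ∫ p in {p : En (n - 1) × ℝ | 0 < p.2}, |φ p| / p.2 ≤
        M + ∫ p in {p : En (n - 1) × ℝ | 0 < p.2}, |φ p| := by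
  set S : Set (En (n - 1) × ℝ) := {p : En (n - 1) × ℝ | 0 < p.2} with hSdef
  set T : Set (En (n - 1) × ℝ) := {p : En (n - 1) × ℝ | 0 < p.2 ∧ p.2 < 1} with hTdef
  set T' : Set (En (n - 1) × ℝ) := {p : En (n - 1) × ℝ | (1:ℝ) ≤ p.2} with hT'def
  have hTopen : IsOpen T :=
    (isOpen_lt continuous_const continuous_snd).inter (isOpen_lt continuous_snd continuous_const)
  have hTmeas : MeasurableSet T := hTopen.measurableSet
  have hT'meas : MeasurableSet T' := measurableSet_le measurable_const measurable_snd
  have hSmeas : MeasurableSet S := hopen_half.measurableSet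
  have hM0 : 0 ≤ M := le_trans (integral_nonneg fun x => abs_nonneg _) (hM 1 one_pos)
  have hφc : ContinuousOn φ {p : En (n - 1) × ℝ | 0 ≤ p.2} := hreg.continuousOn
  -- the per-slice bound
  have key : ∀ t : ℝ, t ∈ Ioo (0:ℝ) 1 →
      ∫⁻ x : En (n - 1), ENNReal.ofReal (|φ (x, t)| / t) ≤ ENNReal.ofReal M := by
    intro t ht
    obtain ⟨ht0, ht1⟩ := ht
    set H : En (n - 1) → ℝ → ENNReal := fun x s => ENNReal.ofReal |deriv (fun r => φ (x, r)) s| with hHdef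
    have hswap : ∫⁻ x : En (n - 1), ∫⁻ s in Ioo (0:ℝ) t, H x s
        = ∫⁻ s in Ioo (0:ℝ) t, ∫⁻ x : En (n - 1), H x s := by
      apply lintegral_lintegral_swap
      have h0 : AEMeasurable (fun p : En (n - 1) × ℝ => H p.1 p.2)
          (volume.restrict {p : En (n - 1) × ℝ | 0 < p.2}) :=
        ENNReal.measurable_ofReal.comp_aemeasurable
          (measurable_abs.comp_aemeasurable (meas_deriv hreg))
      have heq : (volume : Measure (En (n - 1))).prod (volume.restrict (Ioo (0:ℝ) t))
          = (volume : Measure (En (n - 1) × ℝ)).restrict ((univ : Set (En (n - 1))) ×ˢ Ioo (0:ℝ) t) := by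
        rw [Measure.volume_eq_prod, ← Measure.prod_restrict, Measure.restrict_univ]
      rw [heq]
      apply h0.mono_measure
      apply Measure.restrict_mono _ le_rfl
      intro p hp
      exact hp.2.1
    have hb : ∀ x : En (n - 1), ENNReal.ofReal (|φ (x, t)| / t)
        ≤ (∫⁻ s in Ioo (0:ℝ) t, H x s) * (ENNReal.ofReal t)⁻¹ := by
      intro x
      rw [ENNReal.ofReal_div_of_pos ht0, div_eq_mul_inv]
      apply mul_le_mul_left
      calc ENNReal.ofReal |φ (x, t)|
          ≤ ENNReal.ofReal (∫ s in Ioo (0:ℝ) t, |deriv (fun r => φ (x, r)) s|) :=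
            ENNReal.ofReal_le_ofReal (ftc_bound hreg hbc x ht0)
        _ ≤ ∫⁻ s in Ioo (0:ℝ) t, H x s :=
            ofReal_int_le _ _ (ae_of_all _ fun s => abs_nonneg _)
    have htne : (ENNReal.ofReal t)⁻¹ ≠ ⊤ :=
      ENNReal.inv_ne_top.2 (ENNReal.ofReal_pos.2 ht0).ne'
    calc ∫⁻ x : En (n - 1), ENNReal.ofReal (|φ (x, t)| / t)
        ≤ ∫⁻ x : En (n - 1), (∫⁻ s in Ioo (0:ℝ) t, H x s) * (ENNReal.ofReal t)⁻¹ := lintegral_mono hb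
      _ = (∫⁻ x : En (n - 1), ∫⁻ s in Ioo (0:ℝ) t, H x s) * (ENNReal.ofReal t)⁻¹ :=
          lintegral_mul_const' _ _ htne
      _ = (∫⁻ s in Ioo (0:ℝ) t, ∫⁻ x : En (n - 1), H x s) * (ENNReal.ofReal t)⁻¹ := by rw [hswap]
      _ ≤ (∫⁻ _ in Ioo (0:ℝ) t, ENNReal.ofReal M) * (ENNReal.ofReal t)⁻¹ := by
          apply mul_le_mul_left
          apply lintegral_mono_ae
          filter_upwards [ae_restrict_mem measurableSet_Ioo] with s hs
          have h1 : ∫⁻ x : En (n - 1), H x s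
              = ENNReal.ofReal (∫ x : En (n - 1), |deriv (fun r => φ (x, r)) s|) :=
            (ofReal_integral_eq_lintegral_ofReal (hslice s hs.1).abs
              (ae_of_all _ fun x => abs_nonneg _)).symm
          rw [h1]
          exact ENNReal.ofReal_le_ofReal (hM s hs.1)
      _ = ENNReal.ofReal M * (ENNReal.ofReal t * (ENNReal.ofReal t)⁻¹) := by
          rw [lintegral_const, Measure.restrict_apply_univ, Real.volume_Ioo, sub_zero, mul_assoc,
            mul_comm (ENNReal.ofReal M)]
      _ = ENNReal.ofReal M := by
          rw [ENNReal.mul_inv_cancel (ENNReal.ofReal_pos.2 ht0).ne' ENNReal.ofReal_ne_top, mul_one]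
  -- continuity of the integrand on T and T'
  have hfcT : ContinuousOn (fun p : En (n - 1) × ℝ => |φ p| / p.2) T := by
    apply ContinuousOn.div
    · exact (hφc.mono fun p hp => show (0:ℝ) ≤ p.2 from le_of_lt (hp.1 : (0:ℝ) < p.2)).abs
    · exact continuous_snd.continuousOn
    · exact fun p hp => (hp.1 : (0:ℝ) < p.2).ne'
  have hfcT' : ContinuousOn (fun p : En (n - 1) × ℝ => |φ p| / p.2) T' := by
    apply ContinuousOn.div
    · exact (hφc.mono fun p hp => show (0:ℝ) ≤ p.2 from le_trans zero_le_one (hp : (1:ℝ) ≤ p.2)).abs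
    · exact continuous_snd.continuousOn
    · exact fun p hp => (lt_of_lt_of_le one_pos (hp : (1:ℝ) ≤ p.2)).ne'
  -- the lintegral bound on T
  have hTprod : T = (univ : Set (En (n - 1))) ×ˢ Ioo (0:ℝ) 1 := by
    ext p
    simp [hTdef, mem_prod, mem_Ioo]
  have hFmeasT : AEMeasurable (fun p : En (n - 1) × ℝ => ENNReal.ofReal (|φ p| / p.2))
      (volume.restrict T) :=
    (ENNReal.continuous_ofReal.comp_continuousOn hfcT).aemeasurable hTmeas
  have LT : ∫⁻ p in T, ENNReal.ofReal (|φ p| / p.2) ≤ ENNReal.ofReal M := by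
    have heq : (volume : Measure (En (n - 1) × ℝ)).restrict T
        = (volume : Measure (En (n - 1))).prod (volume.restrict (Ioo (0:ℝ) 1)) := by
      rw [hTprod, Measure.volume_eq_prod, ← Measure.prod_restrict, Measure.restrict_univ]
    rw [heq] at hFmeasT ⊢
    rw [lintegral_prod_symm _ hFmeasT]
    calc ∫⁻ t in Ioo (0:ℝ) 1, ∫⁻ x : En (n - 1), ENNReal.ofReal (|φ (x, t)| / t)
        ≤ ∫⁻ _ in Ioo (0:ℝ) 1, ENNReal.ofReal M := by
          apply lintegral_mono_ae
          filter_upwards [ae_restrict_mem measurableSet_Ioo] with t ht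
          exact key t ht
      _ = ENNReal.ofReal M := by
          rw [lintegral_const, Measure.restrict_apply_univ, Real.volume_Ioo, sub_zero,
            ENNReal.ofReal_one, mul_one]
  -- integrability on T
  have hfT : IntegrableOn (fun p : En (n - 1) × ℝ => |φ p| / p.2) T := by
    constructor
    · exact hfcT.aestronglyMeasurable hTmeas
    · rw [hasFiniteIntegral_def]
      calc ∫⁻ p in T, (‖|φ p| / p.2‖₊ : ENNReal)
          = ∫⁻ p in T, ENNReal.ofReal (|φ p| / p.2) := by
            apply lintegral_congr_ae
            filter_upwards [ae_restrict_mem hTmeas] with p hp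
            exact Real.enorm_eq_ofReal (div_nonneg (abs_nonneg _) (le_of_lt hp.1))
        _ ≤ ENNReal.ofReal M := LT
        _ < ⊤ := ENNReal.ofReal_lt_top
  -- integrability on T'
  have hsub' : T' ⊆ S := fun p hp => show (0:ℝ) < p.2 from lt_of_lt_of_le one_pos (hp : (1:ℝ) ≤ p.2)
  have hφT' : IntegrableOn φ T' := hL1.mono_set hsub'
  have hfT' : IntegrableOn (fun p : En (n - 1) × ℝ => |φ p| / p.2) T' := by
    apply Integrable.mono hφT' (hfcT'.aestronglyMeasurable hT'meas)
    filter_upwards [ae_restrict_mem hT'meas] with p hp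
    have hp1 : (1:ℝ) ≤ p.2 := hp
    have h1 : |φ p| / p.2 ≤ |φ p| := div_le_self (abs_nonneg _) hp1
    calc ‖|φ p| / p.2‖ = |φ p| / p.2 :=
          Real.norm_of_nonneg (div_nonneg (abs_nonneg _) (by linarith))
      _ ≤ |φ p| := h1
      _ = ‖φ p‖ := (Real.norm_eq_abs _).symm
  -- decomposition
  have hST : S = T ∪ T' := by
    ext p
    simp only [hSdef, hTdef, hT'def, mem_setOf_eq, mem_union]
    constructor
    · intro h
      rcases lt_or_ge p.2 1 with h1 | h1
      · exact Or.inl ⟨h, h1⟩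
      · exact Or.inr h1
    · rintro (⟨h, _⟩ | h)
      · exact h
      · linarith
  have hdisj : Disjoint T T' := by
    rw [Set.disjoint_left]
    intro p hp hp'
    have h1 : p.2 < 1 := hp.2
    have h2 : (1:ℝ) ≤ p.2 := hp'
    linarith
  have hfS : IntegrableOn (fun p : En (n - 1) × ℝ => |φ p| / p.2) S := by
    rw [hST]
    exact hfT.union hfT'
  refine ⟨hfS, ?_⟩
  have hIT : ∫ p in T, |φ p| / p.2 ≤ M := by
    have hnn : 0 ≤ᵐ[volume.restrict T] fun p : En (n - 1) × ℝ => |φ p| / p.2 := by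
      filter_upwards [ae_restrict_mem hTmeas] with p hp
      exact div_nonneg (abs_nonneg _) (le_of_lt hp.1)
    rw [integral_eq_lintegral_of_nonneg_ae hnn (hfcT.aestronglyMeasurable hTmeas)]
    calc (∫⁻ p in T, ENNReal.ofReal (|φ p| / p.2)).toReal
        ≤ (ENNReal.ofReal M).toReal := ENNReal.toReal_mono ENNReal.ofReal_ne_top LT
      _ = M := ENNReal.toReal_ofReal hM0
  have hIT' : ∫ p in T', |φ p| / p.2 ≤ ∫ p in S, |φ p| := by
    calc ∫ p in T', |φ p| / p.2 ≤ ∫ p in T', |φ p| := by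
          apply setIntegral_mono_on hfT' hφT'.abs hT'meas
          intro p hp
          exact div_le_self (abs_nonneg _) (hp : (1:ℝ) ≤ p.2)
      _ ≤ ∫ p in S, |φ p| := by
          apply setIntegral_mono_set hL1.abs (ae_of_all _ fun p => abs_nonneg _)
          exact HasSubset.Subset.eventuallyLE hsub'
  calc ∫ p in S, |φ p| / p.2 = (∫ p in T, |φ p| / p.2) + ∫ p in T', |φ p| / p.2 := by
        rw [hST, setIntegral_union hdisj hT'meas hfT hfT']
    _ ≤ M + ∫ p in S, |φ p| := add_le_add hIT hIT'
end
end
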